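/- Let ℓ ≥ 1 be a natural number and let c = (ℓ+1, ℓ+1, ℓ+1) be the centre point of the lattice cube L_ℓ. For every point j = (j₁, j₂, j₃) ∈ L_ℓ there exists a bijection f : L_ℓ → L_ℓ such that f(j) = c and, for every x ∈ L_ℓ, |f(x) − c| ≤ |x − j| (Euclidean distances). -/

import Mathlib

open Finset

/-- The point of `ℝ³` (with the Euclidean metric) corresponding to an integer triple. -/
noncomputable def pt (i : ℤ × ℤ × ℤ) : EuclideanSpace ℝ (Fin 3) :=
  (WithLp.equiv 2 (Fin 3 → ℝ)).symm ![(i.1 : ℝ), (i.2.1 : ℝ), (i.2.2 : ℝ)]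

/-- The lattice cube `L_ℓ`: integer triples `(i₁,i₂,i₃)` with `1 ≤ i₁,i₂,i₃ ≤ 2ℓ+1`. -/
noncomputable def latticeCube (ℓ : ℕ) : Finset (ℤ × ℤ × ℤ) :=
  Finset.Icc 1 (2 * (ℓ : ℤ) + 1) ×ˢ Finset.Icc 1 (2 * (ℓ : ℤ) + 1) ×ˢ
    Finset.Icc 1 (2 * (ℓ : ℤ) + 1)

/-- One-dimensional cyclic rotation of `[1, 2ℓ+1]` sending `j` to the centre `ℓ+1`. -/
def gmap (ℓ j x : ℤ) : ℤ := (x + ℓ - j) % (2 * ℓ + 1) + 1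

lemma gmap_range (ℓ : ℤ) (hℓ : 1 ≤ ℓ) (j x : ℤ) :
    1 ≤ gmap ℓ j x ∧ gmap ℓ j x ≤ 2 * ℓ + 1 := by
  have hn : (0:ℤ) < 2 * ℓ + 1 := by linarith
  have h1 := Int.emod_nonneg (x + ℓ - j) (by omega : (2*ℓ+1 : ℤ) ≠ 0)
  have h2 := Int.emod_lt_of_pos (x + ℓ - j) hn
  unfold gmap; omega

lemma gmap_self (ℓ : ℤ) (hℓ : 1 ≤ ℓ) (j : ℤ) : gmap ℓ j j = ℓ + 1 := by
  unfold gmap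
  have : (j + ℓ - j) = ℓ := by ring
  rw [this, Int.emod_eq_of_lt (by linarith) (by linarith)]

lemma gmap_inj (ℓ : ℤ) (hℓ : 1 ≤ ℓ) (j : ℤ) {x y : ℤ}
    (hx1 : 1 ≤ x) (hx2 : x ≤ 2*ℓ+1) (hy1 : 1 ≤ y) (hy2 : y ≤ 2*ℓ+1)
    (h : gmap ℓ j x = gmap ℓ j y) : x = y := by
  unfold gmap at h
  have h' : (x + ℓ - j) % (2*ℓ+1) = (y + ℓ - j) % (2*ℓ+1) := by omega
  have hd : (2*ℓ+1 : ℤ) ∣ (y + ℓ - j) - (x + ℓ - j) := Int.ModEq.dvd h'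
  obtain ⟨k, hk⟩ := hd
  have hk' : y - x = (2*ℓ+1) * k := by linarith
  rcases lt_trichotomy k 0 with hk0 | hk0 | hk0
  · nlinarith
  · rw [hk0, mul_zero] at hk'; omega
  · nlinarith

lemma gmap_dist (ℓ : ℤ) (hℓ : 1 ≤ ℓ) {j x : ℤ}
    (hj1 : 1 ≤ j) (hj2 : j ≤ 2*ℓ+1) (hx1 : 1 ≤ x) (hx2 : x ≤ 2*ℓ+1) :
    |gmap ℓ j x - (ℓ + 1)| ≤ |x - j| := by
  have hn : (0:ℤ) < 2 * ℓ + 1 := by linarith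
  have h1 := Int.emod_nonneg (x + ℓ - j) (by omega : (2*ℓ+1 : ℤ) ≠ 0)
  have h2 := Int.emod_lt_of_pos (x + ℓ - j) hn
  have h3 := Int.emod_add_mul_ediv (x + ℓ - j) (2*ℓ+1)
  set r := (x + ℓ - j) % (2*ℓ+1) with hr
  set q := (x + ℓ - j) / (2*ℓ+1) with hq
  have hg : gmap ℓ j x = r + 1 := by unfold gmap; rw [← hr]
  rw [hg]
  have hql : -1 ≤ q := by nlinarith
  have hqu : q ≤ 1 := by nlinarith
  rcases abs_cases (x - j) with ⟨e1, _⟩ | ⟨e1, _⟩ <;>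
    rcases abs_cases (r + 1 - (ℓ + 1)) with ⟨e2, _⟩ | ⟨e2, _⟩ <;>
    rw [e1, e2] <;> interval_cases q <;> omega

lemma mem_latticeCube {ℓ : ℕ} {x : ℤ × ℤ × ℤ} :
    x ∈ latticeCube ℓ ↔ (1 ≤ x.1 ∧ x.1 ≤ 2*(ℓ:ℤ)+1) ∧ (1 ≤ x.2.1 ∧ x.2.1 ≤ 2*(ℓ:ℤ)+1) ∧
      (1 ≤ x.2.2 ∧ x.2.2 ≤ 2*(ℓ:ℤ)+1) := by
  simp [latticeCube, Finset.mem_Icc]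

lemma pt_dist (a b : ℤ × ℤ × ℤ) :
    dist (pt a) (pt b) = Real.sqrt (((a.1:ℝ) - b.1)^2 + ((a.2.1:ℝ) - b.2.1)^2
      + ((a.2.2:ℝ) - b.2.2)^2) := by
  rw [EuclideanSpace.dist_eq]
  congr 1
  rw [Fin.sum_univ_three]
  simp [pt, Real.dist_eq, sq_abs]

theorem exists_bijection_decreasing_distances (ℓ : ℕ) (hℓ : 1 ≤ ℓ)
    (c : ℤ × ℤ × ℤ) (hc : c = ((ℓ : ℤ) + 1, (ℓ : ℤ) + 1, (ℓ : ℤ) + 1))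
    (j : ℤ × ℤ × ℤ) (hj : j ∈ latticeCube ℓ) :
    ∃ f : ℤ × ℤ × ℤ → ℤ × ℤ × ℤ,
      Set.BijOn f (latticeCube ℓ : Set (ℤ × ℤ × ℤ)) (latticeCube ℓ : Set (ℤ × ℤ × ℤ)) ∧
      f j = c ∧
      ∀ x ∈ latticeCube ℓ, dist (pt (f x)) (pt c) ≤ dist (pt x) (pt j) := by
  have hL : (1:ℤ) ≤ (ℓ:ℤ) := by exact_mod_cast hℓ
  obtain ⟨⟨hj1, hj2⟩, ⟨hj3, hj4⟩, hj5, hj6⟩ := mem_latticeCube.mp hj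
  refine ⟨fun x => (gmap ℓ j.1 x.1, gmap ℓ j.2.1 x.2.1, gmap ℓ j.2.2 x.2.2), ?_, ?_, ?_⟩
  · have hmaps : Set.MapsTo (fun x : ℤ×ℤ×ℤ => (gmap ℓ j.1 x.1, gmap ℓ j.2.1 x.2.1, gmap ℓ j.2.2 x.2.2))
        (latticeCube ℓ : Set (ℤ × ℤ × ℤ)) (latticeCube ℓ : Set (ℤ × ℤ × ℤ)) := by
      intro x hx
      simp only [Set.mem_setOf_eq, Finset.coe_mem, Finset.mem_coe] at *
      exact mem_latticeCube.mpr ⟨gmap_range ℓ hL _ _, gmap_range ℓ hL _ _, gmap_range ℓ hL _ _⟩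
    refine (Set.Finite.injOn_iff_bijOn_of_mapsTo (Finset.finite_toSet _) hmaps).mp ?_
    intro x hx y hy hxy
    simp only [Finset.mem_coe, mem_latticeCube] at hx hy
    obtain ⟨⟨a1, a2⟩, ⟨a3, a4⟩, a5, a6⟩ := hx
    obtain ⟨⟨b1, b2⟩, ⟨b3, b4⟩, b5, b6⟩ := hy
    simp only [Prod.mk.injEq] at hxy
    obtain ⟨h1, h2, h3⟩ := hxy
    exact Prod.ext (gmap_inj ℓ hL _ a1 a2 b1 b2 h1)
      (Prod.ext (gmap_inj ℓ hL _ a3 a4 b3 b4 h2) (gmap_inj ℓ hL _ a5 a6 b5 b6 h3))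
  · simp [hc, gmap_self ℓ hL]
  · intro x hx
    obtain ⟨⟨a1, a2⟩, ⟨a3, a4⟩, a5, a6⟩ := mem_latticeCube.mp hx
    rw [pt_dist, pt_dist, hc]
    apply Real.sqrt_le_sqrt
    have k1 := gmap_dist ℓ hL hj1 hj2 a1 a2
    have k2 := gmap_dist ℓ hL hj3 hj4 a3 a4
    have k3 := gmap_dist ℓ hL hj5 hj6 a5 a6
    have sq : ∀ u v : ℤ, |u| ≤ |v| → ((u:ℝ))^2 ≤ ((v:ℝ))^2 := by
      intro u v h
      have : (|u|:ℝ) ≤ (|v|:ℝ) := by exact_mod_cast h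
      calc ((u:ℝ))^2 = (|u|:ℝ)^2 := by push_cast; rw [sq_abs]
        _ ≤ (|v|:ℝ)^2 := by apply pow_le_pow_left₀ (by positivity) this
        _ = ((v:ℝ))^2 := by push_cast; rw [sq_abs]
    have e1 := sq _ _ k1
    have e2 := sq _ _ k2
    have e3 := sq _ _ k3
    push_cast at e1 e2 e3 ⊢
    linarith
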